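/- Let a > 0 and μ ≥ 0, and for k ∈ ℝ⁴ ∖ {0} define the non-planar tadpole amplitude of the 1/p² model by A(k) = ∫₀^{min(‖k‖², ‖k‖^{-2})} (∫_{ℝ⁴} exp(i ω(k,p)) exp(−α(‖p‖² + a/‖p‖² + μ²)) dp) dα. Then there exists a constant C > 0 such that for all k ≠ 0, |A(k)| ≤ C (1 + 1/‖k‖²). That is, A(k) = F(k)/‖k‖² + G(k) with F and G bounded, so the non-planar tadpole produces only a finite renormalization of the a/p² term. -/

import Mathlib

open MeasureTheory

open Real Set Filter
open Complex hiding exp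
open scoped RealInnerProductSpace

/-- The Moyal oscillation phase `ω(k,p) = k·Θp` on four-dimensional Moyal space
with `θ = 1`. -/
noncomputable def moyalPhase (k p : EuclideanSpace ℝ (Fin 4)) : ℝ :=
  k 0 * p 1 - k 1 * p 0 + k 2 * p 3 - k 3 * p 2



lemma real_gauss_moment (α : ℝ) (hα : 0 < α) :
    ∫ r : ℝ in Ioi 0, r * rexp (-α * r^2) = (2*α)⁻¹ := by
  have hderiv : ∀ x ∈ Ioi (0:ℝ), HasDerivAt (fun y : ℝ => -(2*α)⁻¹ * rexp (-α * y^2))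
      (x * rexp (-α * x^2)) x := by
    intro x _
    have h1 : HasDerivAt (fun y : ℝ => -α * y^2) (-α * (2*x)) x := by
      simpa using ((hasDerivAt_pow 2 x).const_mul (-α))
    have := (h1.exp).const_mul (-(2*α)⁻¹)
    refine this.congr_deriv ?_
    linear_combination (x * rexp (-α*x^2)) * inv_mul_cancel₀ (show (2*α) ≠ 0 by positivity)
  have hcont : ContinuousOn (fun y : ℝ => -(2*α)⁻¹ * rexp (-α * y^2)) (Ici 0) := by
    fun_prop
  have hint : IntegrableOn (fun x : ℝ => x * rexp (-α * x^2)) (Ioi 0) :=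
    (integrable_mul_exp_neg_mul_sq hα).integrableOn
  have htend : Tendsto (fun y : ℝ => -(2*α)⁻¹ * rexp (-α * y^2)) atTop (nhds 0) := by
    rw [show (0:ℝ) = -(2*α)⁻¹ * 0 by ring]
    refine Tendsto.const_mul _ ?_
    refine Real.tendsto_exp_atBot.comp ?_
    apply Tendsto.const_mul_atTop_of_neg (by linarith : -α < 0)
    exact tendsto_pow_atTop (by norm_num)
  have := MeasureTheory.integral_Ioi_of_hasDerivAt_of_tendsto (hcont 0 Set.self_mem_Ici) hderiv hint htend
  rw [this]
  simp

lemma f2_int_bound (a μ α : ℝ) (ha : 0 < a) (hα : 0 < α) :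
    ∫ p : EuclideanSpace ℝ (Fin 4),
        (rexp (-α*(‖p‖^2+μ^2)) - rexp (-α*(‖p‖^2 + a/‖p‖^2 + μ^2)))
      ≤ 2 * (volume (Metric.ball (0:EuclideanSpace ℝ (Fin 4)) 1)).toReal * a := by
  set cB := (volume (Metric.ball (0:EuclideanSpace ℝ (Fin 4)) 1)).toReal with hcB
  have hcB0 : 0 ≤ cB := ENNReal.toReal_nonneg
  have hpolar := MeasureTheory.integral_fun_norm_addHaar
    (volume : Measure (EuclideanSpace ℝ (Fin 4)))
    (fun r : ℝ => rexp (-α*(r^2+μ^2)) - rexp (-α*(r^2 + a/r^2 + μ^2)))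
  rw [finrank_euclideanSpace_fin] at hpolar
  rw [hpolar]
  have hIbound : ∫ y in Ioi (0:ℝ),
      y ^ (4-1) • (rexp (-α*(y^2+μ^2)) - rexp (-α*(y^2 + a/y^2 + μ^2)))
      ≤ a / 2 := by
    have hg : IntegrableOn (fun y : ℝ => α * a * (y * rexp (-α * y^2))) (Ioi 0) :=
      ((integrable_mul_exp_neg_mul_sq hα).integrableOn).const_mul _
    have hle : ∀ y ∈ Ioi (0:ℝ),
        y ^ (4-1) • (rexp (-α*(y^2+μ^2)) - rexp (-α*(y^2 + a/y^2 + μ^2)))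
        ≤ α * a * (y * rexp (-α * y^2)) := by
      intro y hy
      have hy0 : 0 < y := hy
      have hsplit : rexp (-α*(y^2 + a/y^2 + μ^2))
          = rexp (-α*(y^2+μ^2)) * rexp (-α * (a / y^2)) := by
        rw [← Real.exp_add]; ring_nf
      have h1 : 1 - rexp (-α * (a / y^2)) ≤ α * (a / y^2) := by
        have := Real.add_one_le_exp (-α * (a / y^2))
        linarith
      have hx0 : 0 ≤ α * (a / y^2) := by positivity
      have hr2 : rexp (-α*(y^2+μ^2)) ≤ rexp (-α*y^2) := by
        apply Real.exp_le_exp.2; nlinarith [sq_nonneg μ]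
      have hr2pos : 0 < rexp (-α*(y^2+μ^2)) := Real.exp_pos _
      rw [smul_eq_mul, hsplit]
      have key : rexp (-α*(y^2+μ^2)) * (1 - rexp (-α * (a/y^2))) ≤ rexp (-α*y^2) * (α * (a/y^2)) := by
        have h2 : 0 ≤ 1 - rexp (-α * (a / y^2)) := by
          simp [Real.exp_le_one_iff]; positivity
        calc rexp (-α*(y^2+μ^2)) * (1 - rexp (-α * (a/y^2)))
            ≤ rexp (-α*y^2) * (1 - rexp (-α * (a/y^2))) := by
              apply mul_le_mul_of_nonneg_right hr2 h2
          _ ≤ rexp (-α*y^2) * (α * (a/y^2)) := by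
              apply mul_le_mul_of_nonneg_left h1 (Real.exp_pos _).le
      have expand : y ^ (4-1) * (rexp (-α*(y^2+μ^2)) - rexp (-α*(y^2+μ^2)) * rexp (-α*(a/y^2)))
          = y^3 * (rexp (-α*(y^2+μ^2)) * (1 - rexp (-α * (a/y^2)))) := by ring
      rw [expand]
      calc y^3 * (rexp (-α*(y^2+μ^2)) * (1 - rexp (-α * (a/y^2))))
          ≤ y^3 * (rexp (-α*y^2) * (α * (a/y^2))) := by
            apply mul_le_mul_of_nonneg_left key (by positivity)
        _ = α * a * (y * rexp (-α * y^2)) := by field_simp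
    have hnn : ∀ᵐ y ∂(volume.restrict (Ioi (0:ℝ))),
        0 ≤ y ^ (4-1) • (rexp (-α*(y^2+μ^2)) - rexp (-α*(y^2 + a/y^2 + μ^2))) := by
      filter_upwards [ae_restrict_mem measurableSet_Ioi] with y hy
      have hy0 : (0:ℝ) < y := hy
      have : rexp (-α*(y^2 + a/y^2 + μ^2)) ≤ rexp (-α*(y^2+μ^2)) := by
        apply Real.exp_le_exp.2
        have : 0 ≤ a / y^2 := by positivity
        nlinarith
      have h3 : 0 ≤ y ^ (4-1) := by positivity
      simp only [smul_eq_mul]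
      exact mul_nonneg h3 (by linarith)
    have := integral_mono_of_nonneg hnn hg
      (by filter_upwards [ae_restrict_mem measurableSet_Ioi] with y hy using hle y hy)
    calc _ ≤ ∫ y in Ioi (0:ℝ), α * a * (y * rexp (-α * y^2)) := this
      _ = α * a * ∫ y in Ioi (0:ℝ), y * rexp (-α * y^2) := by
          rw [integral_const_mul]
      _ = α * a * (2*α)⁻¹ := by rw [real_gauss_moment α hα]
      _ = a / 2 := by field_simp
  calc (4:ℕ) • cB • ∫ y in Ioi (0:ℝ),
        y ^ (4-1) • (rexp (-α*(y^2+μ^2)) - rexp (-α*(y^2 + a/y^2 + μ^2)))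
      = 4 * (cB * ∫ y in Ioi (0:ℝ),
        y ^ (4-1) • (rexp (-α*(y^2+μ^2)) - rexp (-α*(y^2 + a/y^2 + μ^2)))) := by
        rw [nsmul_eq_mul, smul_eq_mul]; norm_num
    _ ≤ 4 * (cB * (a/2)) := by
        apply mul_le_mul_of_nonneg_left _ (by norm_num)
        apply mul_le_mul_of_nonneg_left hIbound hcB0
    _ = 2 * cB * a := by ring


lemma exp_neg_le (x : ℝ) (hx : 0 < x) : rexp (-x) ≤ 4 / x^2 := by
  have h1 : 1 + x/2 ≤ rexp (x/2) := Real.add_one_le_exp (x/2) |>.trans_eq' (by ring)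
  have h2 : x^2/4 ≤ rexp x := by
    have h0 : (x/2)^2 ≤ (1+x/2)^2 := by nlinarith
    calc x^2/4 = (x/2)^2 := by ring
      _ ≤ (1+x/2)^2 := h0
      _ ≤ rexp (x/2) ^ 2 := by
          apply pow_le_pow_left₀ (by positivity) h1
      _ = rexp x := by
          rw [← Real.exp_nat_mul]; congr 1; push_cast; ring
  rw [Real.exp_neg]
  calc (rexp x)⁻¹ ≤ (x^2/4)⁻¹ := by
        apply inv_anti₀ (by positivity) h2
    _ = 4 / x^2 := by field_simp

lemma term1_integrableOn (K m : ℝ) (hK : 0 < K) (hm : 0 < m) :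
    IntegrableOn (fun α : ℝ => π^2 * (α^2)⁻¹ * rexp (-(K/(4*α)))) (Ioc 0 m) := by
  apply Integrable.mono' (g := fun _ => π^2 * (64/K^2))
  · exact integrableOn_const measure_Ioc_lt_top.ne
  · apply Measurable.aestronglyMeasurable
    have h1 : Measurable fun α : ℝ => (α^2)⁻¹ := (measurable_id.pow_const 2).inv
    have h2 : Measurable fun α : ℝ => -(K/(4*α)) :=
      (measurable_const.div (measurable_id.const_mul 4)).neg
    exact (measurable_const.mul h1).mul (Real.measurable_exp.comp h2)
  · filter_upwards [ae_restrict_mem measurableSet_Ioc] with α hα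
    have hα0 : 0 < α := hα.1
    have hx : 0 < K/(4*α) := by positivity
    have := exp_neg_le _ hx
    rw [Real.norm_eq_abs, abs_of_nonneg (by positivity)]
    calc π^2 * (α^2)⁻¹ * rexp (-(K/(4*α)))
        ≤ π^2 * (α^2)⁻¹ * (4 / (K/(4*α))^2) := by
          apply mul_le_mul_of_nonneg_left this (by positivity)
      _ = π^2 * (64/K^2) := by field_simp; ring

lemma tail_bound (K m : ℝ) (hK : 0 < K) (hm : 0 < m) :
    ∫ α in Ioc (0:ℝ) m, π^2 * (α^2)⁻¹ * rexp (-(K/(4*α))) ≤ 4*π^2/K := by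
  set c := K/4 with hc
  have hc0 : 0 < c := by positivity
  set F : ℝ → ℝ := fun α => π^2 * (α^2)⁻¹ * rexp (-(K/(4*α))) with hF
  set H : ℝ → ℝ := fun α => (π^2/c) * rexp (-(c/α)) with hH
  have hderiv : ∀ x : ℝ, 0 < x → HasDerivAt H (F x) x := by
    intro x hx
    have h1 : HasDerivAt (fun y : ℝ => -(c/y)) (c * (x^2)⁻¹) x := by
      have h0 := ((hasDerivAt_inv (ne_of_gt hx)).const_mul c).neg
      simpa only [Pi.neg_def, div_eq_mul_inv, mul_neg, neg_neg] using h0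
    have := (h1.exp).const_mul (π^2/c)
    refine this.congr_deriv ?_
    simp only [hF, hc]
    field_simp
  set s : ℕ → Set ℝ := fun n => Ioc (m/(n+1)) m with hs
  have hsm : ∀ n, MeasurableSet (s n) := fun n => measurableSet_Ioc
  have hmono : Monotone s := by
    intro i j hij
    apply Ioc_subset_Ioc_left
    apply div_le_div_of_nonneg_left hm.le (by positivity)
    have : (i:ℝ) ≤ j := Nat.cast_le.mpr hij
    linarith
  have hunion : ⋃ n, s n = Ioc (0:ℝ) m := by
    ext x
    simp only [mem_iUnion, mem_Ioc, hs]
    constructor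
    · rintro ⟨n, h1, h2⟩
      exact ⟨lt_trans (by positivity) h1, h2⟩
    · rintro ⟨h1, h2⟩
      obtain ⟨n, hn⟩ := exists_nat_gt (m/x)
      refine ⟨n, ?_, h2⟩
      rw [div_lt_iff₀ (by positivity)]
      calc m = (m/x) * x := by field_simp
        _ < n * x := by apply mul_lt_mul_of_pos_right hn h1
        _ ≤ x * (n+1) := by nlinarith

  have hint : IntegrableOn F (Ioc 0 m) := term1_integrableOn K m hK hm
  have htendsto := MeasureTheory.tendsto_setIntegral_of_monotone hsm hmono (hunion ▸ hint)
  rw [hunion] at htendsto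
  apply le_of_tendsto htendsto
  filter_upwards with n
  have hε : 0 < m/(n+1) := by positivity
  have hεm : m/(n+1) ≤ m := by
    rw [div_le_iff₀ (by positivity)]; nlinarith
  have hii : IntervalIntegrable F volume (m/(n+1)) m := by
    rw [intervalIntegrable_iff_integrableOn_Ioc_of_le hεm]
    exact hint.mono_set (Ioc_subset_Ioc_left hε.le)
  have hFTC := intervalIntegral.integral_eq_sub_of_hasDerivAt
    (f := H) (f' := F) (a := m/(n+1)) (b := m) ?_ hii
  · have : ∫ α in s n, F α = H m - H (m/(n+1)) := by
      rw [← intervalIntegral.integral_of_le hεm] at *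
      exact hFTC
    rw [this]
    have h1 : 0 ≤ H (m/(n+1)) := by
      show (0:ℝ) ≤ π^2/c * rexp (-(c/(m/(n+1))))
      positivity
    have h2 : H m ≤ π^2/c := by
      show π^2/c * rexp (-(c/m)) ≤ π^2/c
      have hle1 : rexp (-(c/m)) ≤ 1 := by
        rw [Real.exp_le_one_iff]
        simp only [Left.neg_nonpos_iff]
        positivity
      calc π^2/c * rexp (-(c/m)) ≤ π^2/c * 1 :=
            mul_le_mul_of_nonneg_left hle1 (by positivity)
        _ = π^2/c := mul_one _
    calc H m - H (m/(n+1)) ≤ H m := by linarith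
      _ ≤ π^2/c := h2
      _ = 4*π^2/K := by rw [hc]; field_simp
  · intro x hx
    rw [uIcc_of_le hεm] at hx
    exact hderiv x (lt_of_lt_of_le hε hx.1)



noncomputable def npTadpole.thetaK (k : EuclideanSpace ℝ (Fin 4)) : EuclideanSpace ℝ (Fin 4) :=
  (WithLp.equiv 2 (Fin 4 → ℝ)).symm ![-(k 1), k 0, -(k 3), k 2]

lemma npTadpole.phase_inner (k p : EuclideanSpace ℝ (Fin 4)) :
    moyalPhase k p = ⟪npTadpole.thetaK k, p⟫ := by
  simp [moyalPhase, npTadpole.thetaK, PiLp.inner_apply, RCLike.inner_apply, Fin.sum_univ_four]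
  ring

lemma npTadpole.norm_thetaK (k : EuclideanSpace ℝ (Fin 4)) : ‖npTadpole.thetaK k‖ = ‖k‖ := by
  rw [EuclideanSpace.norm_eq, EuclideanSpace.norm_eq]
  congr 1
  simp [npTadpole.thetaK, Fin.sum_univ_four]
  ring

lemma npTadpole.gauss_norm (α : ℝ) (hα : 0 < α) (w : EuclideanSpace ℝ (Fin 4)) :
    ‖∫ p : EuclideanSpace ℝ (Fin 4), cexp (-(α:ℂ) * ‖p‖^2 + I * ⟪w, p⟫)‖
      = π^2 * (α^2)⁻¹ * rexp (-(‖w‖^2/(4*α))) := by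
  rw [GaussianFourier.integral_cexp_neg_mul_sq_norm_add (by simpa using hα) I w]
  have h4 : (Module.finrank ℝ (EuclideanSpace ℝ (Fin 4)) : ℂ) / 2 = 2 := by
    simp [finrank_euclideanSpace_fin]; norm_num
  rw [h4]
  have h5 : I ^ 2 * (‖w‖:ℂ)^2 / (4 * (α:ℂ)) = ((-(‖w‖^2/(4*α)) : ℝ) : ℂ) := by
    rw [I_sq]; push_cast; ring
  rw [h5, norm_mul]
  have h1 : ‖(↑π / (α:ℂ)) ^ (2:ℂ)‖ = π^2 * (α^2)⁻¹ := by
    rw [show ((2:ℂ)) = ((2:ℕ):ℂ) by norm_num, Complex.cpow_natCast, norm_pow]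
    rw [show (↑π / (α:ℂ)) = ((π/α : ℝ):ℂ) by push_cast; ring]
    rw [Complex.norm_real, Real.norm_eq_abs, abs_of_nonneg (by positivity)]
    field_simp
  rw [h1, Complex.norm_exp, Complex.ofReal_re]

lemma npTadpole.inner_bound (a μ : ℝ) (ha : 0 < a) (hμ : 0 ≤ μ)
    (k : EuclideanSpace ℝ (Fin 4)) (α : ℝ) (hα : 0 < α) :
    ‖∫ p : EuclideanSpace ℝ (Fin 4),
        Complex.exp (Complex.I * (moyalPhase k p : ℂ)) *
          Real.exp (-α * (‖p‖ ^ 2 + a / ‖p‖ ^ 2 + μ ^ 2))‖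
      ≤ π^2 * (α^2)⁻¹ * rexp (-(‖k‖^2/(4*α)))
        + 2 * (volume (Metric.ball (0:EuclideanSpace ℝ (Fin 4)) 1)).toReal * a := by
  have hαc : (0:ℝ) < ((α:ℂ)).re := by simpa using hα
  set w := npTadpole.thetaK k with hw
  set f₁ : EuclideanSpace ℝ (Fin 4) → ℂ := fun p =>
    cexp (I * (moyalPhase k p : ℂ)) * (rexp (-α * (‖p‖^2 + μ^2)) : ℂ) with hf₁
  set f₂ : EuclideanSpace ℝ (Fin 4) → ℂ := fun p =>
    cexp (I * (moyalPhase k p : ℂ)) *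
      ((rexp (-α * (‖p‖ ^ 2 + a / ‖p‖ ^ 2 + μ ^ 2)) - rexp (-α * (‖p‖^2 + μ^2)) : ℝ) : ℂ) with hf₂
  have hf₁eq : f₁ = fun p => (rexp (-α * μ^2) : ℂ) *
      cexp (-(α:ℂ) * ‖p‖^2 + I * ⟪w, p⟫) := by
    funext p
    simp only [hf₁]
    rw [Complex.ofReal_exp, Complex.ofReal_exp, ← Complex.exp_add, ← Complex.exp_add]
    congr 1
    rw [npTadpole.phase_inner k p, ← hw]
    push_cast
    ring
  have h₁int : Integrable f₁ := by
    rw [hf₁eq]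
    exact (GaussianFourier.integrable_cexp_neg_mul_sq_norm_add hαc I w).const_mul _
  have hgauss : Integrable (fun p : EuclideanSpace ℝ (Fin 4) => rexp (-α * ‖p‖^2)) := by
    have h := (GaussianFourier.integrable_cexp_neg_mul_sq_norm_add hαc 0
      (0 : EuclideanSpace ℝ (Fin 4))).norm
    have heq : ∀ p : EuclideanSpace ℝ (Fin 4),
        ‖cexp (-(α:ℂ) * ‖p‖^2 + 0 * ⟪(0 : EuclideanSpace ℝ (Fin 4)), p⟫)‖
          = rexp (-α * ‖p‖^2) := by
      intro p
      rw [zero_mul, add_zero, Complex.norm_exp]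
      congr 1
      rw [show -(α:ℂ) * (‖p‖:ℂ)^2 = ((-α * ‖p‖^2 : ℝ) : ℂ) by push_cast; ring,
        Complex.ofReal_re]
    simpa only [heq] using h
  have hnormf₂ : ∀ p : EuclideanSpace ℝ (Fin 4), ‖f₂ p‖
      = rexp (-α * (‖p‖^2 + μ^2)) - rexp (-α * (‖p‖ ^ 2 + a / ‖p‖ ^ 2 + μ ^ 2)) := by
    intro p
    rw [hf₂, norm_mul]
    have h1 : ‖cexp (I * ((moyalPhase k p : ℝ) : ℂ))‖ = 1 := by
      rw [Complex.norm_exp]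
      simp
    rw [h1, one_mul, Complex.norm_real, Real.norm_eq_abs]
    rw [abs_sub_comm, abs_of_nonneg]
    have : -α * (‖p‖ ^ 2 + a / ‖p‖ ^ 2 + μ ^ 2) ≤ -α * (‖p‖^2 + μ^2) := by
      have h2 : 0 ≤ a / ‖p‖ ^ 2 := div_nonneg ha.le (by positivity)
      nlinarith
    have := Real.exp_le_exp.2 this
    linarith
  have h₂int : Integrable f₂ := by
    apply Integrable.mono' hgauss
    · apply Measurable.aestronglyMeasurable
      apply Measurable.mul
      · apply Complex.measurable_exp.comp
        apply Measurable.const_mul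
        apply Complex.measurable_ofReal.comp
        unfold moyalPhase
        fun_prop
      · apply Complex.measurable_ofReal.comp
        apply Measurable.sub
        · apply Real.measurable_exp.comp
          apply Measurable.const_mul
          apply Measurable.add
          apply Measurable.add
          · fun_prop
          · exact (measurable_const.div ((measurable_norm).pow_const 2))
          · fun_prop
        · fun_prop
    · filter_upwards with p
      rw [hnormf₂ p]
      have h2 : 0 ≤ rexp (-α * (‖p‖ ^ 2 + a / ‖p‖ ^ 2 + μ ^ 2)) := (Real.exp_pos _).le
      have h3 : rexp (-α * (‖p‖^2 + μ^2)) ≤ rexp (-α * ‖p‖^2) := by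
        apply Real.exp_le_exp.2
        nlinarith [sq_nonneg μ]
      linarith
  have hsplit : (fun p : EuclideanSpace ℝ (Fin 4) =>
      Complex.exp (Complex.I * (moyalPhase k p : ℂ)) *
        (Real.exp (-α * (‖p‖ ^ 2 + a / ‖p‖ ^ 2 + μ ^ 2)) : ℂ)) = fun p => f₁ p + f₂ p := by
    funext p
    rw [hf₁, hf₂]
    push_cast
    ring
  rw [hsplit, integral_add h₁int h₂int]
  have hb₁ : ‖∫ p : EuclideanSpace ℝ (Fin 4), f₁ p‖
      ≤ π^2 * (α^2)⁻¹ * rexp (-(‖k‖^2/(4*α))) := by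
    rw [hf₁eq, integral_const_mul, norm_mul]
    rw [npTadpole.gauss_norm α hα w]
    rw [Complex.norm_real, Real.norm_eq_abs, abs_of_nonneg (Real.exp_pos _).le]
    rw [npTadpole.norm_thetaK]
    have hle1 : rexp (-α * μ^2) ≤ 1 := by
      rw [Real.exp_le_one_iff]
      nlinarith [sq_nonneg μ]
    calc rexp (-α * μ^2) * (π^2 * (α^2)⁻¹ * rexp (-(‖k‖^2/(4*α))))
        ≤ 1 * (π^2 * (α^2)⁻¹ * rexp (-(‖k‖^2/(4*α)))) :=
          mul_le_mul_of_nonneg_right hle1 (by positivity)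
      _ = π^2 * (α^2)⁻¹ * rexp (-(‖k‖^2/(4*α))) := one_mul _
  have hb₂ : ‖∫ p : EuclideanSpace ℝ (Fin 4), f₂ p‖
      ≤ 2 * (volume (Metric.ball (0:EuclideanSpace ℝ (Fin 4)) 1)).toReal * a := by
    calc ‖∫ p : EuclideanSpace ℝ (Fin 4), f₂ p‖
        ≤ ∫ p : EuclideanSpace ℝ (Fin 4), ‖f₂ p‖ := norm_integral_le_integral_norm _
      _ = ∫ p : EuclideanSpace ℝ (Fin 4),
            (rexp (-α*(‖p‖^2+μ^2)) - rexp (-α*(‖p‖^2 + a/‖p‖^2 + μ^2))) := by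
          congr 1; funext p; rw [hnormf₂ p]
      _ ≤ _ := f2_int_bound a μ α ha hα
  calc ‖(∫ p, f₁ p) + ∫ p, f₂ p‖ ≤ ‖∫ p, f₁ p‖ + ‖∫ p, f₂ p‖ := norm_add_le _ _
    _ ≤ _ := add_le_add hb₁ hb₂

/-- The non-planar tadpole of the `1/p²` model, with the Schwinger parameter of
its internal line restricted to `α < min(‖k‖², ‖k‖⁻²)` by the multiscale slicing,
is bounded by `C(1 + 1/‖k‖²)`: it produces only a finite renormalization of the
`a/p²` term. -/
theorem nonplanar_tadpole_finite_renormalization (a μ : ℝ) (ha : 0 < a) (hμ : 0 ≤ μ) :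
    ∃ C > (0 : ℝ), ∀ k : EuclideanSpace ℝ (Fin 4), k ≠ 0 →
      ‖∫ α in (0 : ℝ)..(min (‖k‖ ^ 2) ((‖k‖ ^ 2)⁻¹)),
          ∫ p : EuclideanSpace ℝ (Fin 4),
            Complex.exp (Complex.I * (moyalPhase k p : ℂ)) *
              Real.exp (-α * (‖p‖ ^ 2 + a / ‖p‖ ^ 2 + μ ^ 2))‖
        ≤ C * (1 + 1 / ‖k‖ ^ 2) := by
  set cB := (volume (Metric.ball (0:EuclideanSpace ℝ (Fin 4)) 1)).toReal with hcB
  have hcB0 : 0 ≤ cB := ENNReal.toReal_nonneg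
  refine ⟨4*π^2 + 2*cB*a + 1, by positivity, ?_⟩
  intro k hk
  set K := ‖k‖^2 with hKdef
  have hK : 0 < K := by
    have : 0 < ‖k‖ := norm_pos_iff.mpr hk
    positivity
  set m := min K K⁻¹ with hmdef
  have hm0 : 0 < m := lt_min hK (inv_pos.2 hK)
  have hm1 : m ≤ 1 := by
    rcases le_total K 1 with h | h
    · exact le_trans (min_le_left _ _) h
    · exact le_trans (min_le_right _ _) (inv_le_one_of_one_le₀ h)
  have hconst_int : IntegrableOn (fun _ : ℝ => 2*cB*a) (Ioc 0 m) := by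
    refine integrableOn_const ?_
    exact measure_Ioc_lt_top.ne
  have step1 : ‖∫ α in (0:ℝ)..m,
      ∫ p : EuclideanSpace ℝ (Fin 4),
        Complex.exp (Complex.I * (moyalPhase k p : ℂ)) *
          Real.exp (-α * (‖p‖ ^ 2 + a / ‖p‖ ^ 2 + μ ^ 2))‖
      ≤ ∫ α in Ioc (0:ℝ) m, ‖∫ p : EuclideanSpace ℝ (Fin 4),
          Complex.exp (Complex.I * (moyalPhase k p : ℂ)) *
            Real.exp (-α * (‖p‖ ^ 2 + a / ‖p‖ ^ 2 + μ ^ 2))‖ := by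
    have h := intervalIntegral.norm_integral_le_integral_norm_uIoc
      (f := fun α => ∫ p : EuclideanSpace ℝ (Fin 4),
        Complex.exp (Complex.I * (moyalPhase k p : ℂ)) *
          Real.exp (-α * (‖p‖ ^ 2 + a / ‖p‖ ^ 2 + μ ^ 2)))
      (a := (0:ℝ)) (b := m) (μ := volume)
    rwa [Set.uIoc_of_le hm0.le] at h
  have step2 : ∫ α in Ioc (0:ℝ) m, ‖∫ p : EuclideanSpace ℝ (Fin 4),
        Complex.exp (Complex.I * (moyalPhase k p : ℂ)) *
          Real.exp (-α * (‖p‖ ^ 2 + a / ‖p‖ ^ 2 + μ ^ 2))‖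
      ≤ ∫ α in Ioc (0:ℝ) m, (π^2 * (α^2)⁻¹ * rexp (-(K/(4*α))) + 2*cB*a) := by
    apply integral_mono_of_nonneg
    · filter_upwards with α using norm_nonneg _
    · exact (term1_integrableOn K m hK hm0).add hconst_int
    · filter_upwards [ae_restrict_mem measurableSet_Ioc] with α hα
      exact npTadpole.inner_bound a μ ha hμ k α hα.1
  have step3 : ∫ α in Ioc (0:ℝ) m, (π^2 * (α^2)⁻¹ * rexp (-(K/(4*α))) + 2*cB*a)
      ≤ 4*π^2/K + 2*cB*a := by
    rw [integral_add (term1_integrableOn K m hK hm0) hconst_int]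
    have h1 := tail_bound K m hK hm0
    have h2 : ∫ _ in Ioc (0:ℝ) m, (2*cB*a) = m * (2*cB*a) := by
      rw [setIntegral_const, Measure.real, Real.volume_Ioc, smul_eq_mul]
      rw [ENNReal.toReal_ofReal (by linarith)]
      ring_nf
    have h3 : m * (2*cB*a) ≤ 2*cB*a := mul_le_of_le_one_left (by positivity) hm1
    rw [h2]
    linarith
  have final : 4*π^2/K + 2*cB*a ≤ (4*π^2 + 2*cB*a + 1) * (1 + 1/K) := by
    have e1 : 4*π^2/K ≤ (4*π^2 + 2*cB*a + 1)/K := by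
      gcongr
      nlinarith [sq_nonneg π]
    have e2 : (4*π^2 + 2*cB*a + 1) * (1 + 1/K) = (4*π^2 + 2*cB*a + 1) + (4*π^2 + 2*cB*a + 1)/K := by
      field_simp
    rw [e2]
    have : (0:ℝ) < π^2 := by positivity
    linarith
  calc ‖∫ α in (0:ℝ)..m, ∫ p : EuclideanSpace ℝ (Fin 4),
        Complex.exp (Complex.I * (moyalPhase k p : ℂ)) *
          Real.exp (-α * (‖p‖ ^ 2 + a / ‖p‖ ^ 2 + μ ^ 2))‖
      ≤ _ := step1
    _ ≤ _ := step2
    _ ≤ 4*π^2/K + 2*cB*a := step3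
    _ ≤ (4*π^2 + 2*cB*a + 1) * (1 + 1/K) := final
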